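/- Let K be a nonempty convex compact subset of a Hausdorff locally convex topological vector space. Suppose H is an abelian semigroup of continuous affine self-maps of K and g : K → K is a single continuous affine map such that for every h ∈ H there is h′ ∈ H with h ∘ g = g ∘ h′. Then the semigroup generated by H ∪ {g} has a common fixed point in K. -/

import Mathlib

def AffOn {X : Type*} [AddCommGroup X] [Module ℝ X] (K : Set X) (f : K → K) : Prop :=
  ∀ (x y : K) (t : ℝ), 0 ≤ t → t ≤ 1 →
    ∀ h : t • (x : X) + (1 - t) • (y : X) ∈ K,
      (f ⟨_, h⟩ : X) = t • (f x : X) + (1 - t) • (f y : X)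

section MKaux

variable {X : Type*} [AddCommGroup X] [Module ℝ X] {K : Set X}

private lemma wt_nonneg (n : ℕ) : (0 : ℝ) ≤ (((n : ℝ) + 2))⁻¹ := by positivity

private lemma wt_le_one (n : ℕ) : (((n : ℝ) + 2))⁻¹ ≤ 1 := by
  rw [inv_le_one_iff₀]
  right
  have : (0:ℝ) ≤ (n:ℝ) := Nat.cast_nonneg n
  linarith

lemma avg_mem_aux (hconv : Convex ℝ K) (x y : K) (n : ℕ) :
    ((n : ℝ) + 2)⁻¹ • (x : X) + (1 - ((n : ℝ) + 2)⁻¹) • (y : X) ∈ K :=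
  hconv x.2 y.2 (wt_nonneg n) (by have := wt_le_one n; linarith) (by ring)

/-- Cesàro-type averages of the orbit of `x` under `f`, defined recursively so that
`avg n x` is the uniform average of `x, f x, ..., f^[n] x`. -/
noncomputable def avg (hconv : Convex ℝ K) (f : K → K) : ℕ → K → K
  | 0, x => x
  | n + 1, x => ⟨_, avg_mem_aux hconv x (f (avg hconv f n x)) n⟩

lemma avg_zero (hconv : Convex ℝ K) (f : K → K) (x : K) : avg hconv f 0 x = x := rfl

lemma avg_succ (hconv : Convex ℝ K) (f : K → K) (n : ℕ) (x : K) :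
    avg hconv f (n + 1) x = ⟨_, avg_mem_aux hconv x (f (avg hconv f n x)) n⟩ := rfl

end MKaux

section MK

variable {X : Type*} [AddCommGroup X] [Module ℝ X] [TopologicalSpace X]
  [IsTopologicalAddGroup X] [ContinuousSMul ℝ X] [T2Space X]
  {K : Set X}

open Pointwise

lemma avg_continuous (hconv : Convex ℝ K) {f : K → K} (hf : Continuous f) :
    ∀ n : ℕ, Continuous (avg hconv f n)
  | 0 => continuous_id
  | n + 1 => by
    apply Continuous.subtype_mk
    exact (continuous_const.smul continuous_subtype_val).add
      (continuous_const.smul (continuous_subtype_val.comp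
        (hf.comp (avg_continuous hconv hf n))))

/-- Any affine map commuting with `f` commutes with the averaging maps of `f`. -/
lemma comm_avg (hconv : Convex ℝ K) {f u : K → K} (hu : AffOn K u)
    (huf : ∀ x, u (f x) = f (u x)) :
    ∀ (n : ℕ) (x : K), u (avg hconv f n x) = avg hconv f n (u x)
  | 0, x => rfl
  | n + 1, x => by
    apply Subtype.ext
    rw [avg_succ]
    rw [hu x (f (avg hconv f n x)) _ (wt_nonneg n) (wt_le_one n)
      (avg_mem_aux hconv x (f (avg hconv f n x)) n)]
    rw [avg_succ]
    rw [huf (avg hconv f n x), comm_avg hconv hu huf n x]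

lemma avg_affOn (hconv : Convex ℝ K) {f : K → K} (hf : AffOn K f) :
    ∀ n : ℕ, AffOn K (avg hconv f n)
  | 0 => by intro x y t ht0 ht1 h; rfl
  | n + 1 => by
    intro x y t ht0 ht1 h
    have IH := avg_affOn hconv hf n
    -- value of avg at the combination
    have hmem : t • ((avg hconv f n x : K) : X) + (1 - t) • ((avg hconv f n y : K) : X) ∈ K :=
      hconv (avg hconv f n x).2 (avg hconv f n y).2 ht0 (by linarith) (by ring)
    have h1 : avg hconv f n ⟨_, h⟩ = ⟨_, hmem⟩ := Subtype.ext (IH x y t ht0 ht1 h)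
    have h2 := hf (avg hconv f n x) (avg hconv f n y) t ht0 ht1 hmem
    rw [avg_succ, avg_succ, avg_succ]
    show ((n : ℝ) + 2)⁻¹ • _ + _ • ((f (avg hconv f n ⟨_, h⟩) : K) : X) = _
    rw [h1, h2]
    show (((n : ℝ) + 2)⁻¹ • (t • (x : X) + (1 - t) • (y : X)) +
        (1 - ((n : ℝ) + 2)⁻¹) •
          (t • ((f (avg hconv f n x) : K) : X) + (1 - t) • ((f (avg hconv f n y) : K) : X))) =
      t • (((n : ℝ) + 2)⁻¹ • (x : X) + (1 - ((n : ℝ) + 2)⁻¹) • ((f (avg hconv f n x) : K) : X)) +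
      (1 - t) • (((n : ℝ) + 2)⁻¹ • (y : X) +
        (1 - ((n : ℝ) + 2)⁻¹) • ((f (avg hconv f n y) : K) : X))
    module

/-- The key Markov–Kakutani estimate: `f (avg n x) - avg n x = (n+1)⁻¹ • (f^[n+1] x - x)`. -/
lemma avg_est (hconv : Convex ℝ K) {f : K → K} (hf : AffOn K f) :
    ∀ (n : ℕ) (x : K),
      ((f (avg hconv f n x) : K) : X) - ((avg hconv f n x : K) : X) =
        ((n : ℝ) + 1)⁻¹ • (((f^[n + 1] x : K) : X) - (x : X))
  | 0, x => by simp [avg_zero]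
  | n + 1, x => by
    have hcomm : f (avg hconv f n x) = avg hconv f n (f x) :=
      comm_avg hconv hf (fun _ => rfl) n x
    have IH := avg_est hconv hf n (f x)
    have h2 := hf x (f (avg hconv f n x)) _ (wt_nonneg n) (wt_le_one n)
      (avg_mem_aux hconv x (f (avg hconv f n x)) n)
    rw [Function.iterate_succ_apply f (n + 1) x]
    rw [avg_succ, h2, hcomm]
    have hcast : (((n + 1 : ℕ)) : ℝ) + 1 = (n : ℝ) + 2 := by push_cast; ring
    rw [hcast]
    have hB := sub_eq_iff_eq_add.mp IH
    rw [hB]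
    have hn1 : ((n : ℝ) + 1) ≠ 0 := by positivity
    have hn2 : ((n : ℝ) + 2) ≠ 0 := by positivity
    show (((n : ℝ) + 2)⁻¹ • ((f x : K) : X) +
        (1 - ((n : ℝ) + 2)⁻¹) •
          (((n : ℝ) + 1)⁻¹ • (((f^[n + 1] (f x) : K) : X) - ((f x : K) : X)) +
            ((avg hconv f n (f x) : K) : X))) -
        (((n : ℝ) + 2)⁻¹ • (x : X) +
          (1 - ((n : ℝ) + 2)⁻¹) • ((avg hconv f n (f x) : K) : X)) =
      ((n : ℝ) + 2)⁻¹ • (((f^[n + 1] (f x) : K) : X) - (x : X))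
    match_scalars <;> field_simp <;> ring

lemma avg_mem_invariant (hconv : Convex ℝ K) {f : K → K} {S : Set X}
    (hSconv : Convex ℝ S) (hinv : ∀ x : K, (x : X) ∈ S → ((f x : K) : X) ∈ S) :
    ∀ (n : ℕ) (x : K), (x : X) ∈ S → ((avg hconv f n x : K) : X) ∈ S
  | 0, x, hx => hx
  | n + 1, x, hx => by
    rw [avg_succ]
    exact hSconv hx (hinv _ (avg_mem_invariant hconv hSconv hinv n x hx))
      (wt_nonneg n) (by have := wt_le_one n; linarith) (by ring)

/-- Markov–Kakutani fixed point theorem, relative form: a commuting family of continuous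
affine self-maps of `K` preserving a nonempty compact convex subset `S` has a common fixed
point lying in `S`. -/
lemma markov_kakutani (hconv : Convex ℝ K) (hcomp : IsCompact K)
    (S : Set X) (hSconv : Convex ℝ S) (hSc : IsCompact S)
    (hSne : ∃ x : K, (x : X) ∈ S)
    (Fam : Set (K → K))
    (hFc : ∀ f ∈ Fam, Continuous f) (hFa : ∀ f ∈ Fam, AffOn K f)
    (hFcomm : ∀ f ∈ Fam, ∀ g ∈ Fam, ∀ x, f (g x) = g (f x))
    (hFinv : ∀ f ∈ Fam, ∀ x : K, (x : X) ∈ S → ((f x : K) : X) ∈ S) :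
    ∃ p : K, (p : X) ∈ S ∧ ∀ f ∈ Fam, f p = p := by
  haveI : CompactSpace K := isCompact_iff_compactSpace.mp hcomp
  set S' : Set K := Subtype.val ⁻¹' S with hS'def
  have hS'cl : IsClosed S' := hSc.isClosed.preimage continuous_subtype_val
  have hS'comp : IsCompact S' := hS'cl.isCompact
  set C : {f : K → K // f ∈ Fam} × ℕ → Set K :=
    fun i => avg hconv i.1.1 i.2 '' S' with hCdef
  have hCcl : ∀ i, IsClosed (C i) :=
    fun i => (hS'comp.image (avg_continuous hconv (hFc _ i.1.2) i.2)).isClosed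
  have hfip : ∀ u : Finset ({f : K → K // f ∈ Fam} × ℕ), (S' ∩ ⋂ i ∈ u, C i).Nonempty := by
    intro u
    classical
    induction u using Finset.induction_on with
    | empty =>
      obtain ⟨x₀, hx₀⟩ := hSne
      exact ⟨x₀, hx₀, by simp⟩
    | insert _ _ ha IH =>
      rename_i a u
      obtain ⟨p, hpS', hpC⟩ := IH
      refine ⟨avg hconv a.1.1 a.2 p, avg_mem_invariant hconv hSconv (hFinv _ a.1.2) a.2 p hpS', ?_⟩
      rw [Set.mem_iInter₂]
      intro i hi
      rcases Finset.mem_insert.mp hi with rfl | hiu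
      · exact ⟨p, hpS', rfl⟩
      · have hpi : p ∈ C i := by
          have := Set.mem_iInter₂.mp hpC i hiu
          exact this
        obtain ⟨x, hxS', hax⟩ := hpi
        refine ⟨avg hconv a.1.1 a.2 x,
          avg_mem_invariant hconv hSconv (hFinv _ a.1.2) a.2 x hxS', ?_⟩
        have hswap : avg hconv i.1.1 i.2 (avg hconv a.1.1 a.2 x) =
            avg hconv a.1.1 a.2 (avg hconv i.1.1 i.2 x) := by
          have h1 : ∀ y, i.1.1 (a.1.1 y) = a.1.1 (i.1.1 y) :=
            hFcomm i.1.1 i.1.2 a.1.1 a.1.2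
          have h2 : ∀ y, avg hconv i.1.1 i.2 (a.1.1 y) = a.1.1 (avg hconv i.1.1 i.2 y) := by
            intro y
            have := comm_avg hconv (hFa a.1.1 a.1.2) (fun z => (h1 z).symm) i.2 y
            exact this.symm
          exact comm_avg hconv (avg_affOn hconv (hFa i.1.1 i.1.2) i.2)
            (fun z => h2 z) a.2 x
        rw [hswap, hax]
  obtain ⟨p, hpS', hpC⟩ := hS'comp.inter_iInter_nonempty C hCcl hfip
  refine ⟨p, hpS', ?_⟩
  intro f hf
  apply Subtype.ext
  by_contra hne
  set d : X := ((f p : K) : X) - (p : X) with hd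
  have hd0 : d ≠ 0 := fun h => hne (by
    have : ((f p : K) : X) = (p : X) := by
      have := sub_eq_zero.mp h
      exact this
    exact this)
  have hUopen : IsOpen ({d}ᶜ : Set X) := isOpen_compl_singleton
  -- tube lemma on {0} × (K - K)
  have hKKcomp : IsCompact (K - K) := by
    rw [sub_eq_add_neg]; exact hcomp.add hcomp.neg
  have hpre : IsOpen {q : ℝ × X | q.1 • q.2 ∈ ({d}ᶜ : Set X)} :=
    hUopen.preimage continuous_smul
  have hsub : ({(0 : ℝ)} : Set ℝ) ×ˢ (K - K) ⊆ {q : ℝ × X | q.1 • q.2 ∈ ({d}ᶜ : Set X)} := by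
    rintro ⟨t, y⟩ ⟨ht, -⟩
    simp only [Set.mem_singleton_iff] at ht
    subst ht
    simp only [Set.mem_setOf_eq, zero_smul, Set.mem_compl_iff, Set.mem_singleton_iff]
    exact fun h => hd0 h.symm
  obtain ⟨u, v, huo, -, h0u, hKKv, huv⟩ :=
    generalized_tube_lemma isCompact_singleton hKKcomp hpre hsub
  have htend : Filter.Tendsto (fun n : ℕ => ((n : ℝ) + 1)⁻¹) Filter.atTop (nhds 0) := by
    have := tendsto_one_div_add_atTop_nhds_zero_nat (𝕜 := ℝ)
    simpa [one_div] using this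
  have hev : ∀ᶠ n : ℕ in Filter.atTop, ((n : ℝ) + 1)⁻¹ ∈ u :=
    htend.eventually_mem (huo.mem_nhds (h0u rfl))
  obtain ⟨n, hn⟩ := hev.exists
  have hpn : p ∈ C ⟨⟨f, hf⟩, n⟩ := Set.mem_iInter.mp hpC ⟨⟨f, hf⟩, n⟩
  obtain ⟨x, -, hx⟩ := hpn
  have hest := avg_est hconv (hFa f hf) n x
  rw [hx] at hest
  have hmem : ((f^[n + 1] x : K) : X) - (x : X) ∈ K - K :=
    Set.sub_mem_sub (f^[n + 1] x).2 x.2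
  have : d ∈ ({d}ᶜ : Set X) := by
    have hq : (((n : ℝ) + 1)⁻¹, ((f^[n + 1] x : K) : X) - (x : X)) ∈ u ×ˢ v :=
      ⟨hn, hKKv hmem⟩
    have := huv hq
    simpa [hd, hest] using this
  exact this rfl

end MK

theorem stmt17 {X : Type*} [AddCommGroup X] [Module ℝ X] [TopologicalSpace X]
    [IsTopologicalAddGroup X] [ContinuousSMul ℝ X] [T2Space X] [LocallyConvexSpace ℝ X]
    (K : Set X) (hne : K.Nonempty) (hconv : Convex ℝ K) (hcomp : IsCompact K)
    (H : Set (Function.End K)) (g : Function.End K)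
    (hH : ∀ f ∈ H, Continuous (f : K → K) ∧ AffOn K (f : K → K))
    (hg : Continuous (g : K → K) ∧ AffOn K (g : K → K))
    (hHclosed : ∀ f ∈ H, ∀ f' ∈ H, f * f' ∈ H)
    (hHabel : ∀ f ∈ H, ∀ f' ∈ H, f * f' = f' * f)
    (hnormal : ∀ h ∈ H, ∃ h' ∈ H, h * g = g * h') :
    ∃ p : K, ∀ f ∈ Subsemigroup.closure (H ∪ {g}), (f : K → K) p = p := by
  haveI : CompactSpace K := isCompact_iff_compactSpace.mp hcomp
  obtain ⟨x₀, hx₀⟩ := hne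
  -- Step 1: common fixed point of H
  have step1 : ∃ q : K, ∀ f ∈ H, (f : K → K) q = q := by
    obtain ⟨q, -, hq⟩ := markov_kakutani hconv hcomp K hconv hcomp
      ⟨⟨x₀, hx₀⟩, hx₀⟩ (H : Set (K → K))
      (fun f hf => (hH f hf).1) (fun f hf => (hH f hf).2)
      (fun f hf f' hf' x => congrFun (hHabel f hf f' hf') x)
      (fun f _ x _ => ((f : K → K) x).2)
    exact ⟨q, hq⟩
  obtain ⟨q, hq⟩ := step1
  -- the fixed point set of H
  set F₀ : Set K := {x : K | ∀ f ∈ H, (f : K → K) x = x} with hF₀def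
  set S₁ : Set X := Subtype.val '' F₀ with hS₁def
  have hqF₀ : q ∈ F₀ := hq
  have hS₁ne : ∃ x : K, (x : X) ∈ S₁ := ⟨q, q, hqF₀, rfl⟩
  have hS₁conv : Convex ℝ S₁ := by
    rintro a ⟨x, hx, rfl⟩ b ⟨y, hy, rfl⟩ s t hs ht hst
    obtain rfl : t = 1 - s := by linarith
    have hs1 : s ≤ 1 := by linarith
    have hmem : s • (x : X) + (1 - s) • (y : X) ∈ K := hconv x.2 y.2 hs (by linarith) (by ring)
    refine ⟨⟨_, hmem⟩, ?_, rfl⟩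
    intro f hf
    apply Subtype.ext
    rw [(hH f hf).2 x y s hs hs1 hmem, hx f hf, hy f hf]
  have hF₀cl : IsClosed F₀ := by
    have : F₀ = ⋂ f ∈ H, {x : K | (f : K → K) x = x} := by
      ext x; simp [hF₀def]
    rw [this]
    exact isClosed_biInter fun f hf => isClosed_eq (hH f hf).1 continuous_id
  have hS₁comp : IsCompact S₁ := (hF₀cl.isCompact).image continuous_subtype_val
  have hginv : ∀ x : K, (x : X) ∈ S₁ → (((g : K → K) x : K) : X) ∈ S₁ := by
    rintro x ⟨y, hy, hyx⟩
    have hxF : x ∈ F₀ := by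
      have hxy : y = x := Subtype.ext hyx
      rwa [hxy] at hy
    refine ⟨(g : K → K) x, ?_, rfl⟩
    intro f hf
    obtain ⟨h', hh', heq⟩ := hnormal f hf
    have hfg : (f : K → K) ((g : K → K) x) = (g : K → K) ((h' : K → K) x) := congrFun heq x
    rw [hfg, hxF h' hh']
  -- Step 2: fixed point of g inside S₁
  obtain ⟨p, hpS₁, hpg⟩ := markov_kakutani hconv hcomp S₁ hS₁conv hS₁comp hS₁ne
    ({(g : K → K)} : Set (K → K))
    (fun f hf => by replace hf : f = g := hf; subst hf; exact hg.1)
    (fun f hf => by replace hf : f = g := hf; subst hf; exact hg.2)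
    (fun f hf f' hf' x => by
      replace hf : f = g := hf; replace hf' : f' = g := hf'; subst hf; subst hf'; rfl)
    (fun f hf x hx => by replace hf : f = g := hf; subst hf; exact hginv x hx)
  have hpF₀ : p ∈ F₀ := by
    obtain ⟨y, hy, hyx⟩ := hpS₁
    have hxy : y = p := Subtype.ext hyx
    rwa [hxy] at hy
  have hgp : (g : K → K) p = p := hpg _ rfl
  refine ⟨p, ?_⟩
  intro f hf
  induction hf using Subsemigroup.closure_induction with
  | mem f hfm =>
    rcases hfm with hfH | hfg
    · exact hpF₀ f hfH
    · rw [Set.mem_singleton_iff] at hfg; subst hfg; exact hgp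
  | mul f f' hf hf' ihf ihf' =>
    show (f : K → K) ((f' : K → K) p) = p
    rw [ihf', ihf]
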